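/- Let b ∈ ℝ^m with |b(i)| ≤ 1 for all i, let q* be the supervertex of P(b), and let u be an ℓ-positive vector. Then max{⟨u⁺, x⟩ : x ∈ P(b)} = ⟨u⁺, q*⟩, where u⁺ is the pointwise truncation max{u(·),0}. -/

import Mathlib

open Finset

/-- The value λ(k) for λ ∈ Λ = {0,1}^m, extended by the conventions λ(0) = 0 and
λ(m+1) = 1 (positions 1,…,m carry the actual values of λ). -/
def lamExt (m : ℕ) (lam : Fin m → Bool) (k : ℕ) : ℕ :=
  if h : 1 ≤ k ∧ k ≤ m then (if lam ⟨k - 1, by omega⟩ then 1 else 0)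
  else if k = 0 then 0 else 1

/-- The vector ℓ_i ∈ ℝ^Λ, ℓ_i(λ) = (−1)^{λ(i)}, for 0 ≤ i ≤ m. -/
def ell (m : ℕ) (i : ℕ) (lam : Fin m → Bool) : ℝ := (-1) ^ lamExt m lam i

/-- The standard inner product on ℝ^Λ. -/
def ip (m : ℕ) (x y : (Fin m → Bool) → ℝ) : ℝ := ∑ lam : Fin m → Bool, x lam * y lam

/-- The polytope P(b). -/
def Pb (m : ℕ) (b : ℕ → ℝ) : Set ((Fin m → Bool) → ℝ) :=
  {x | ip m (ell m 0) x = 1 ∧ (∀ i ∈ Finset.Icc 1 m, ip m (ell m i) x = b i) ∧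
    ∀ lam, 0 ≤ x lam}

/-- b extended by the conventions b(0) = 1 and b(m+1) = −1. -/
noncomputable def bext (m : ℕ) (b : ℕ → ℝ) (k : ℕ) : ℝ :=
  if k = 0 then 1 else if k ≤ m then b k else -1

/-- b'(i) = (b(i) − b(i+1))/2 for 0 ≤ i ≤ m. -/
noncomputable def b' (m : ℕ) (b : ℕ → ℝ) (i : ℕ) : ℝ :=
  (bext m b i - bext m b (i + 1)) / 2

/-- μ_i ∈ Λ: μ_i(k) = 0 for k ≤ i, μ_i(k) = 1 for k ≥ i+1. -/
def mu (m i : ℕ) : Fin m → Bool := fun k => decide (i ≤ (k : ℕ))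

/-- The supervertex Σ_{i=0}^m b'(i)·e_{μ_i} (for decreasing b). -/
noncomputable def supervertexDec (m : ℕ) (b : ℕ → ℝ) : (Fin m → Bool) → ℝ :=
  fun lam => ∑ i ∈ Finset.range (m + 1), b' m b i * (if lam = mu m i then 1 else 0)

/-- The induced action σ_*(x)(λ) = x(λ∘σ) on ℝ^Λ. -/
def act (m : ℕ) (σ : Equiv.Perm (Fin m)) (x : (Fin m → Bool) → ℝ) :
    (Fin m → Bool) → ℝ := fun lam => x (lam ∘ σ)

/-- u is ℓ-positive if u = Σ_{i=0}^m a_i ℓ_i with a_1,…,a_m > 0. -/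
def lpos (m : ℕ) (u : (Fin m → Bool) → ℝ) : Prop :=
  ∃ a : ℕ → ℝ, (∀ i ∈ Finset.Icc 1 m, 0 < a i) ∧
    u = fun lam => ∑ i ∈ Finset.range (m + 1), a i * ell m i lam

/-- The truncation u⁺ = max{u(·), 0}. -/
noncomputable def truncPos (m : ℕ) (u : (Fin m → Bool) → ℝ) : (Fin m → Bool) → ℝ :=
  fun lam => max (u lam) 0

lemma lamExt_cases (m : ℕ) (lam : Fin m → Bool) (k : ℕ) :
    lamExt m lam k = 0 ∨ lamExt m lam k = 1 := by
  unfold lamExt; split_ifs <;> simp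

lemma ell_eq (m i : ℕ) (lam : Fin m → Bool) :
    ell m i lam = 1 - 2 * (lamExt m lam i : ℝ) := by
  rcases lamExt_cases m lam i with h | h <;> simp [ell, h] <;> norm_num

lemma ell_zero' (m : ℕ) (lam : Fin m → Bool) : ell m 0 lam = 1 := by
  simp [ell, lamExt]

lemma lamExt_mu' (m i k : ℕ) (h : k < m) :
    lamExt m (mu m i) (k + 1) = if i ≤ k then 1 else 0 := by
  rw [show lamExt m (mu m i) (k+1) = (if (mu m i) ⟨k, h⟩ then 1 else 0) by
    unfold lamExt; rw [dif_pos ⟨by omega, by omega⟩]; simp]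
  simp [mu]

noncomputable def fmax (c x : ℝ) : ℝ := max (c - 2*x) 0

-- Step 4 : value of an affine ell-functional on Pb
lemma ip_linform (m : ℕ) (b : ℕ → ℝ) (E : ℝ) (C : ℕ → ℝ)
    (x : (Fin m → Bool) → ℝ) (hx : x ∈ Pb m b) :
    ip m (fun lam => E + ∑ i ∈ range m, C i * ell m (i+1) lam) x
      = E + ∑ i ∈ range m, C i * b (i+1) := by
  obtain ⟨h0, hc, _⟩ := hx
  have hsum1 : ∑ lam : Fin m → Bool, x lam = 1 := by
    have := h0
    unfold ip at this
    simpa [ell_zero'] using this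
  unfold ip
  calc ∑ lam : Fin m → Bool, (E + ∑ i ∈ range m, C i * ell m (i+1) lam) * x lam
      = ∑ lam : Fin m → Bool,
          (E * x lam + ∑ i ∈ range m, C i * (ell m (i+1) lam * x lam)) := by
        refine Finset.sum_congr rfl fun lam _ => ?_
        rw [add_mul, Finset.sum_mul]
        congr 1
        exact Finset.sum_congr rfl fun i _ => by ring
    _ = E * ∑ lam : Fin m → Bool, x lam
        + ∑ i ∈ range m, C i * ∑ lam : Fin m → Bool, ell m (i+1) lam * x lam := by
        rw [Finset.sum_add_distrib, ← Finset.mul_sum]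
        congr 1
        rw [Finset.sum_comm]
        exact Finset.sum_congr rfl fun i _ => (Finset.mul_sum _ _ _).symm
    _ = E + ∑ i ∈ range m, C i * b (i+1) := by
        rw [hsum1, mul_one]
        congr 1
        refine Finset.sum_congr rfl fun i hi => ?_
        simp only [mem_range] at hi
        have := hc (i+1) (by simp only [Finset.mem_Icc]; omega)
        unfold ip at this
        rw [this]

noncomputable def Tt (m : ℕ) (a : ℕ → ℝ) (j : ℕ) : ℝ := ∑ k ∈ Ico j m, a (k+1)
noncomputable def cc (m : ℕ) (a : ℕ → ℝ) : ℝ := a 0 + ∑ i ∈ range m, a (i+1)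
noncomputable def dd (m : ℕ) (a : ℕ → ℝ) (i : ℕ) : ℝ :=
  fmax (cc m a) (Tt m a i) - fmax (cc m a) (Tt m a (i+1))
noncomputable def tt (m : ℕ) (a : ℕ → ℝ) (lam : Fin m → Bool) : ℝ :=
  ∑ i ∈ range m, (lamExt m lam (i+1) : ℝ) * a (i+1)
noncomputable def yy (m : ℕ) (a : ℕ → ℝ) (lam : Fin m → Bool) : ℝ :=
  fmax (cc m a) 0 + ∑ i ∈ range m, (lamExt m lam (i+1) : ℝ) * dd m a i

lemma Tt_succ (m : ℕ) (a : ℕ → ℝ) (i : ℕ) (h : i < m) :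
    Tt m a i = Tt m a (i+1) + a (i+1) := by
  unfold Tt
  rw [Finset.sum_eq_sum_Ico_succ_bot h]
  ring

lemma Tt_top (m : ℕ) (a : ℕ → ℝ) : Tt m a m = 0 := by simp [Tt]

lemma u_eq (m : ℕ) (a : ℕ → ℝ) (lam : Fin m → Bool) :
    ∑ i ∈ range (m+1), a i * ell m i lam = cc m a - 2 * tt m a lam := by
  rw [Finset.sum_range_succ' (fun i => a i * ell m i lam) m]
  rw [ell_zero', mul_one]
  have h : ∀ i, a (i+1) * ell m (i+1) lam
      = a (i+1) - 2 * ((lamExt m lam (i+1) : ℝ) * a (i+1)) := fun i => by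
    rw [ell_eq]; ring
  simp_rw [h]
  rw [Finset.sum_sub_distrib, ← Finset.mul_sum]
  unfold cc tt
  ring

lemma incr' (c s T a : ℝ) (hsT : s ≤ T) (ha : 0 ≤ a) :
    fmax c (s + a) - fmax c s ≤ fmax c (T + a) - fmax c T := by
  unfold fmax
  simp only [max_def]
  split_ifs <;> linarith

lemma shiftsum (a : ℕ → ℝ) (j N : ℕ) :
    ∑ k ∈ Ico j N, a (k+1) = ∑ k ∈ Ico (j+1) (N+1), a k := by
  rw [Finset.sum_Ico_eq_sum_range, Finset.sum_Ico_eq_sum_range]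
  simp only [show N + 1 - (j + 1) = N - j by omega]
  refine Finset.sum_congr rfl fun i _ => ?_
  congr 1; omega

lemma key (c : ℝ) : ∀ (N : ℕ) (a L : ℕ → ℝ), (∀ i < N, 0 < a i) →
    (∀ i < N, L i = 0 ∨ L i = 1) →
    fmax c (∑ i ∈ range N, L i * a i) ≤ fmax c 0 +
      ∑ i ∈ range N, L i *
        (fmax c ((∑ k ∈ Ico (i+1) N, a k) + a i) - fmax c (∑ k ∈ Ico (i+1) N, a k)) := by
  intro N
  induction N with
  | zero => intro a L _ _; simp
  | succ N IH =>
    intro a L ha hL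
    have IH' := IH (fun i => a (i+1)) (fun i => L (i+1))
      (fun i hi => ha (i+1) (by omega)) (fun i hi => hL (i+1) (by omega))
    simp_rw [shiftsum a] at IH'
    rw [Finset.sum_range_succ' (fun i => L i * a i) N]
    rw [Finset.sum_range_succ' (fun i => L i *
      (fmax c ((∑ k ∈ Ico (i+1) (N+1), a k) + a i) - fmax c (∑ k ∈ Ico (i+1) (N+1), a k))) N]
    set t' := ∑ i ∈ range N, L (i+1) * a (i+1) with ht'
    set S1 := ∑ k ∈ Ico 1 (N+1), a k with hS1
    have hts : t' ≤ S1 := by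
      rw [hS1, ← shiftsum a 0 N, Nat.Ico_zero_eq_range]
      apply Finset.sum_le_sum
      intro i hi
      simp only [mem_range] at hi
      rcases hL (i+1) (by omega) with h | h <;> rw [h]
      · simp [le_of_lt (ha (i+1) (by omega))]
      · simp
    have step : fmax c (t' + L 0 * a 0) ≤ fmax c t' +
        L 0 * (fmax c (S1 + a 0) - fmax c S1) := by
      rcases hL 0 (by omega) with h | h <;> rw [h]
      · simp
      · simp only [one_mul]
        have := incr' c t' S1 (a 0) hts (le_of_lt (ha 0 (by omega)))
        linarith
    calc fmax c (t' + L 0 * a 0) ≤ fmax c t' + L 0 * (fmax c (S1 + a 0) - fmax c S1) := step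
      _ ≤ (fmax c 0 + ∑ i ∈ range N, L (i+1) *
            (fmax c ((∑ k ∈ Ico (i+1+1) (N+1), a k) + a (i+1))
              - fmax c (∑ k ∈ Ico (i+1+1) (N+1), a k)))
          + L 0 * (fmax c (S1 + a 0) - fmax c S1) := by linarith [IH']
      _ = _ := by ring

-- pointwise bound : truncPos u ≤ yy
lemma pointwise_le (m : ℕ) (a : ℕ → ℝ) (ha : ∀ i ∈ Icc 1 m, 0 < a i)
    (lam : Fin m → Bool) :
    fmax (cc m a) (tt m a lam) ≤ yy m a lam := by
  have hkey := key (cc m a) m (fun i => a (i+1)) (fun i => (lamExt m lam (i+1) : ℝ))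
    (fun i hi => ha (i+1) (by simp only [Finset.mem_Icc]; omega))
    (fun i _ => by rcases lamExt_cases m lam (i+1) with h | h <;> simp [h])
  unfold tt yy
  refine le_trans hkey ?_
  apply add_le_add_right
  apply le_of_eq
  refine Finset.sum_congr rfl fun i hi => ?_
  simp only [mem_range] at hi
  congr 1
  unfold dd
  rw [Tt_succ m a i hi]
  rfl

lemma tele' (g : ℕ → ℝ) (i m : ℕ) (h : i ≤ m) :
    ∑ k ∈ Ico i m, (g k - g (k + 1)) = g i - g m := by
  rw [Finset.sum_Ico_eq_sum_range]
  have he : ∀ k, g (i + k) - g (i + k + 1)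
      = (fun j => g (i + j)) k - (fun j => g (i+j)) (k+1) := by
    intro k; simp [Nat.add_assoc]
  simp_rw [he]
  rw [Finset.sum_range_sub' (f := fun j => g (i + j))]
  congr 2
  omega

lemma filter_range_eq_Ico (m i : ℕ) :
    (range m).filter (fun k => i ≤ k) = Ico i m := by
  ext k; simp only [mem_filter, mem_range, mem_Ico]; omega

lemma tt_mu (m : ℕ) (a : ℕ → ℝ) (i : ℕ) : tt m a (mu m i) = Tt m a i := by
  unfold tt Tt
  rw [Finset.sum_congr rfl (g := fun k => if i ≤ k then a (k+1) else 0) (by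
    intro k hk
    simp only [mem_range] at hk
    rw [lamExt_mu' m i k hk]
    split_ifs with hh <;> simp [hh])]
  rw [Finset.sum_ite, Finset.sum_const_zero, add_zero, filter_range_eq_Ico]

lemma yy_mu (m : ℕ) (a : ℕ → ℝ) (i : ℕ) (hi : i ≤ m) :
    yy m a (mu m i) = fmax (cc m a) (Tt m a i) := by
  unfold yy
  rw [Finset.sum_congr rfl (g := fun k => if i ≤ k then dd m a k else 0) (by
    intro k hk
    simp only [mem_range] at hk
    rw [lamExt_mu' m i k hk]
    split_ifs with hh <;> simp [hh])]
  rw [Finset.sum_ite, Finset.sum_const_zero, add_zero, filter_range_eq_Ico]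
  unfold dd
  rw [tele' (fun j => fmax (cc m a) (Tt m a j)) i m hi]
  rw [Tt_top]
  ring

lemma yy_linform (m : ℕ) (a : ℕ → ℝ) (lam : Fin m → Bool) :
    yy m a lam = (fmax (cc m a) 0 + (∑ i ∈ range m, dd m a i)/2)
      + ∑ i ∈ range m, (-(dd m a i)/2) * ell m (i+1) lam := by
  unfold yy
  have h : ∀ i, (-(dd m a i)/2) * ell m (i+1) lam
      = (lamExt m lam (i+1) : ℝ) * dd m a i - dd m a i / 2 := fun i => by
    rw [ell_eq]; ring
  simp_rw [h]
  rw [Finset.sum_sub_distrib, ← Finset.sum_div]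
  ring

lemma ip_supervertex (m : ℕ) (b : ℕ → ℝ) (w : (Fin m → Bool) → ℝ) :
    ip m w (supervertexDec m b) = ∑ i ∈ range (m + 1), b' m b i * w (mu m i) := by
  unfold ip supervertexDec
  simp_rw [Finset.mul_sum]
  rw [Finset.sum_comm]
  refine Finset.sum_congr rfl fun i _ => ?_
  rw [Finset.sum_congr rfl (g := fun lam => if lam = mu m i then w lam * (b' m b i) else 0)]
  · simp [mul_comm]
  · intro lam _
    split_ifs with h <;> simp [h] <;> ring

lemma ell_mu (m i k : ℕ) (h1 : 1 ≤ i) (h2 : i ≤ m) :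
    ell m i (mu m k) = if k < i then -1 else 1 := by
  obtain ⟨j, rfl⟩ : ∃ j, i = j + 1 := ⟨i - 1, by omega⟩
  unfold ell
  rw [show lamExt m (mu m k) (j+1) = if k ≤ j then 1 else 0 from by
    rw [lamExt_mu' m k j (by omega)]]
  split_ifs with h h' h' <;> simp_all <;> omega

lemma sum_b' (m : ℕ) (b : ℕ → ℝ) (i n : ℕ) (h : i ≤ n) :
    ∑ k ∈ Ico i n, b' m b k = (bext m b i - bext m b n) / 2 := by
  unfold b'
  rw [← Finset.sum_div]
  rw [tele' (bext m b) i n h]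

lemma mem_core (m : ℕ) (b : ℕ → ℝ)
    (hbdec : ∀ i ≤ m, bext m b (i + 1) ≤ bext m b i) :
    supervertexDec m b ∈ Pb m b := by
  have hb'0 : ∀ i ∈ range (m + 1), 0 ≤ b' m b i := by
    intro i hi
    simp only [mem_range] at hi
    have := hbdec i (by omega)
    unfold b'; linarith
  have hbm1 : bext m b (m + 1) = -1 := by simp [bext]
  have hb0 : bext m b 0 = 1 := by simp [bext]
  refine ⟨?_, ?_, ?_⟩
  · rw [ip_supervertex]
    simp_rw [ell_zero', mul_one]
    rw [← Nat.Ico_zero_eq_range, sum_b' m b 0 (m+1) (by omega), hbm1, hb0]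
    norm_num
  · intro i hi
    simp only [Finset.mem_Icc] at hi
    rw [ip_supervertex]
    simp_rw [ell_mu m i _ hi.1 hi.2]
    have hsplit : range (m+1) = Ico 0 i ∪ Ico i (m+1) := by
      rw [Finset.Ico_union_Ico_eq_Ico (by omega) (by omega), Nat.Ico_zero_eq_range]
    rw [hsplit, Finset.sum_union (by
      apply Finset.Ico_disjoint_Ico_consecutive)]
    have e1 : ∑ k ∈ Ico 0 i, b' m b k * (if k < i then (-1:ℝ) else 1)
        = -((bext m b 0 - bext m b i)/2) := by
      rw [Finset.sum_congr rfl (g := fun k => -(b' m b k)) (by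
        intro k hk; simp only [Finset.mem_Ico] at hk; rw [if_pos hk.2]; ring)]
      rw [Finset.sum_neg_distrib, sum_b' m b 0 i (by omega)]
    have e2 : ∑ k ∈ Ico i (m+1), b' m b k * (if k < i then (-1:ℝ) else 1)
        = (bext m b i - bext m b (m+1))/2 := by
      rw [Finset.sum_congr rfl (g := fun k => b' m b k) (by
        intro k hk; simp only [Finset.mem_Ico] at hk; rw [if_neg (by omega)]; ring)]
      exact sum_b' m b i (m+1) (by omega)
    rw [e1, e2, hb0, hbm1]
    have : bext m b i = b i := by
      unfold bext; rw [if_neg (by omega), if_pos hi.2]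
    linarith [this]
  · intro lam
    unfold supervertexDec
    apply Finset.sum_nonneg
    intro i hi
    have := hb'0 i hi
    positivity

lemma core_ub (m : ℕ) (b : ℕ → ℝ) (hbdec : ∀ i ≤ m, bext m b (i+1) ≤ bext m b i)
    (a : ℕ → ℝ) (ha : ∀ i ∈ Icc 1 m, 0 < a i)
    (x : (Fin m → Bool) → ℝ) (hx : x ∈ Pb m b) :
    ip m (truncPos m (fun lam => ∑ i ∈ range (m+1), a i * ell m i lam)) x
      ≤ ip m (truncPos m (fun lam => ∑ i ∈ range (m+1), a i * ell m i lam))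
          (supervertexDec m b) := by
  have htp : ∀ lam, truncPos m (fun lam => ∑ i ∈ range (m+1), a i * ell m i lam) lam
      = fmax (cc m a) (tt m a lam) := by
    intro lam
    unfold truncPos fmax
    show max (∑ i ∈ range (m+1), a i * ell m i lam) 0 = max (cc m a - 2 * tt m a lam) 0
    rw [u_eq m a lam]
  have hq := mem_core m b hbdec
  have h1 : ip m (truncPos m (fun lam => ∑ i ∈ range (m+1), a i * ell m i lam)) x
      ≤ ip m (yy m a) x := by
    unfold ip
    apply Finset.sum_le_sum
    intro lam _
    apply mul_le_mul_of_nonneg_right _ (hx.2.2 lam)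
    rw [htp lam]
    exact pointwise_le m a ha lam
  have hfun : yy m a = fun lam => (fmax (cc m a) 0 + (∑ i ∈ range m, dd m a i)/2)
      + ∑ i ∈ range m, (-(dd m a i)/2) * ell m (i+1) lam := funext (yy_linform m a)
  have h2 : ip m (yy m a) x = ip m (yy m a) (supervertexDec m b) := by
    rw [hfun,
      ip_linform m b _ (fun i => -(dd m a i)/2) x hx,
      ip_linform m b _ (fun i => -(dd m a i)/2) _ hq]
  have h3 : ip m (yy m a) (supervertexDec m b)
      = ip m (truncPos m (fun lam => ∑ i ∈ range (m+1), a i * ell m i lam))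
          (supervertexDec m b) := by
    rw [ip_supervertex, ip_supervertex]
    refine Finset.sum_congr rfl fun i hi => ?_
    simp only [mem_range] at hi
    rw [htp, tt_mu, yy_mu m a i (by omega)]
  linarith

lemma ell_pos_fin (m : ℕ) (j : Fin m) (lam : Fin m → Bool) :
    ell m ((j : ℕ) + 1) lam = (-1) ^ (if lam j then 1 else 0 : ℕ) := by
  unfold ell lamExt
  rw [dif_pos ⟨by omega, by omega⟩]
  congr 2

lemma act_act_inv (m : ℕ) (σ : Equiv.Perm (Fin m)) (x : (Fin m → Bool) → ℝ) :
    act m σ (act m σ⁻¹ x) = x := by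
  funext lam
  unfold act
  congr 1
  funext k
  simp

lemma act_inv_act (m : ℕ) (σ : Equiv.Perm (Fin m)) (x : (Fin m → Bool) → ℝ) :
    act m σ⁻¹ (act m σ x) = x := by
  funext lam
  unfold act
  congr 1
  funext k
  simp

lemma ip_act (m : ℕ) (σ : Equiv.Perm (Fin m)) (w x : (Fin m → Bool) → ℝ) :
    ip m (act m σ w) (act m σ x) = ip m w x := by
  unfold ip act
  exact Fintype.sum_equiv (Equiv.arrowCongr σ.symm (Equiv.refl Bool))
    _ _ (fun lam => by simp [Equiv.arrowCongr])

lemma act_ell (m : ℕ) (τ : Equiv.Perm (Fin m)) (j : Fin m) :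
    act m τ (ell m ((j : ℕ) + 1)) = ell m ((τ j : ℕ) + 1) := by
  funext lam
  unfold act
  rw [ell_pos_fin, ell_pos_fin]
  rfl

lemma act_ell_zero (m : ℕ) (τ : Equiv.Perm (Fin m)) :
    act m τ (ell m 0) = ell m 0 := by
  funext lam
  unfold act ell lamExt
  simp

lemma ip_ell_act (m : ℕ) (τ : Equiv.Perm (Fin m)) (j : Fin m) (x : (Fin m → Bool) → ℝ) :
    ip m (ell m ((j : ℕ) + 1)) (act m τ x)
      = ip m (ell m ((τ⁻¹ j : ℕ) + 1)) x := by
  conv_lhs => rw [show ell m ((j:ℕ)+1) = act m τ (ell m ((τ⁻¹ j : ℕ) + 1)) by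
    rw [act_ell]; simp]
  rw [ip_act]

lemma ip_ell_zero_act (m : ℕ) (τ : Equiv.Perm (Fin m)) (x : (Fin m → Bool) → ℝ) :
    ip m (ell m 0) (act m τ x) = ip m (ell m 0) x := by
  conv_lhs => rw [← act_ell_zero m τ]
  rw [ip_act]

lemma Pb_act_fwd (m : ℕ) (b sb : ℕ → ℝ) (σ : Equiv.Perm (Fin m))
    (hsb : ∀ i : Fin m, sb ((i : ℕ) + 1) = b (((σ⁻¹ : Equiv.Perm (Fin m)) i : ℕ) + 1))
    (x : (Fin m → Bool) → ℝ) (hx : x ∈ Pb m b) : act m σ x ∈ Pb m sb := by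
  obtain ⟨h0, hc, hpos⟩ := hx
  refine ⟨by rw [ip_ell_zero_act]; exact h0, ?_, fun lam => hpos _⟩
  intro i hi
  simp only [Finset.mem_Icc] at hi
  set j : Fin m := ⟨i - 1, by omega⟩ with hj
  have hij : (j : ℕ) + 1 = i := by simp [hj]; omega
  rw [← hij, ip_ell_act m σ j x]
  rw [hc (((σ⁻¹ : Equiv.Perm (Fin m)) j : ℕ) + 1) (by
    simp only [Finset.mem_Icc]
    exact ⟨by omega, by have := ((σ⁻¹ : Equiv.Perm (Fin m)) j).isLt; omega⟩)]
  exact (hsb j).symm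

lemma Pb_act_bwd (m : ℕ) (b sb : ℕ → ℝ) (σ : Equiv.Perm (Fin m))
    (hsb : ∀ i : Fin m, sb ((i : ℕ) + 1) = b (((σ⁻¹ : Equiv.Perm (Fin m)) i : ℕ) + 1))
    (x : (Fin m → Bool) → ℝ) (hx : x ∈ Pb m sb) : act m σ⁻¹ x ∈ Pb m b := by
  obtain ⟨h0, hc, hpos⟩ := hx
  refine ⟨by rw [ip_ell_zero_act]; exact h0, ?_, fun lam => hpos _⟩
  intro i hi
  simp only [Finset.mem_Icc] at hi
  set j : Fin m := ⟨i - 1, by omega⟩ with hj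
  have hij : (j : ℕ) + 1 = i := by simp [hj]; omega
  rw [← hij, ip_ell_act m σ⁻¹ j x]
  rw [inv_inv]
  rw [hc ((σ j : ℕ) + 1) (by
    simp only [Finset.mem_Icc]
    exact ⟨by omega, by have := (σ j).isLt; omega⟩)]
  have := hsb (σ j)
  simp only [Equiv.Perm.inv_def, Equiv.symm_apply_apply] at this
  rw [this]

lemma ell_zero2 (m : ℕ) (lam : Fin m → Bool) : ell m 0 lam = 1 := by
  simp [ell, lamExt]

noncomputable def aperm (m : ℕ) (σ : Equiv.Perm (Fin m)) (a : ℕ → ℝ) : ℕ → ℝ :=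
  fun i => if h : 1 ≤ i ∧ i ≤ m
    then a (((σ⁻¹ : Equiv.Perm (Fin m)) ⟨i-1, by omega⟩ : ℕ) + 1) else a i

lemma aperm_zero (m : ℕ) (σ : Equiv.Perm (Fin m)) (a : ℕ → ℝ) :
    aperm m σ a 0 = a 0 := by
  unfold aperm; rw [dif_neg (by omega)]

lemma aperm_succ (m : ℕ) (σ : Equiv.Perm (Fin m)) (a : ℕ → ℝ) (j : Fin m) :
    aperm m σ a ((j : ℕ) + 1) = a (((σ⁻¹ : Equiv.Perm (Fin m)) j : ℕ) + 1) := by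
  unfold aperm
  rw [dif_pos ⟨by omega, by have := j.isLt; omega⟩]
  congr

lemma aperm_pos (m : ℕ) (σ : Equiv.Perm (Fin m)) (a : ℕ → ℝ)
    (ha : ∀ i ∈ Icc 1 m, 0 < a i) : ∀ i ∈ Icc 1 m, 0 < aperm m σ a i := by
  intro i hi
  simp only [Finset.mem_Icc] at hi
  unfold aperm
  rw [dif_pos ⟨hi.1, hi.2⟩]
  apply ha
  simp only [Finset.mem_Icc]
  exact ⟨by omega, by
    have := ((σ⁻¹ : Equiv.Perm (Fin m)) ⟨i-1, by omega⟩).isLt; omega⟩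

lemma act_u (m : ℕ) (σ : Equiv.Perm (Fin m)) (a : ℕ → ℝ) :
    act m σ (fun lam => ∑ i ∈ range (m+1), a i * ell m i lam)
      = fun lam => ∑ i ∈ range (m+1), aperm m σ a i * ell m i lam := by
  funext lam
  show ∑ i ∈ range (m+1), a i * ell m i (lam ∘ σ)
      = ∑ i ∈ range (m+1), aperm m σ a i * ell m i lam
  rw [Finset.sum_range_succ' (fun i => a i * ell m i (lam ∘ σ)) m,
      Finset.sum_range_succ' (fun i => aperm m σ a i * ell m i lam) m]
  rw [ell_zero2, ell_zero2, aperm_zero]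
  congr 1
  rw [Finset.sum_range (fun i => a (i+1) * ell m (i+1) (lam ∘ σ)),
      Finset.sum_range (fun i => aperm m σ a (i+1) * ell m (i+1) lam)]
  refine Fintype.sum_equiv σ _ _ fun i => ?_
  have h1 : ell m ((i : ℕ)+1) (lam ∘ σ) = ell m ((σ i : ℕ) + 1) lam :=
    congrFun (act_ell m σ i) lam
  rw [h1, aperm_succ]
  simp

/-- If |b(i)| ≤ 1 for all i, u is ℓ-positive, σ is a permutation of {1,…,m} whose
induced rearrangement sb = σ_*(b) (sb(i) = b(σ⁻¹(i))) is decreasing, and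
q* = σ_*^{−1}(Σ_{i=0}^m sb'(i)·e_{μ_i}) is the supervertex of P(b), then
⟨u⁺, q*⟩ is the maximum of ⟨u⁺, x⟩ over x ∈ P(b). -/
theorem stmt16 (m : ℕ) (hm : 1 ≤ m) (b : ℕ → ℝ)
    (hb : ∀ i ∈ Finset.Icc 1 m, |b i| ≤ 1)
    (u : (Fin m → Bool) → ℝ) (hu : lpos m u)
    (σ : Equiv.Perm (Fin m)) (sb : ℕ → ℝ)
    (hsb : ∀ i : Fin m, sb ((i : ℕ) + 1)
      = b ((((σ⁻¹ : Equiv.Perm (Fin m)) i : Fin m) : ℕ) + 1))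
    (hdec : ∀ i j, 1 ≤ i → i ≤ j → j ≤ m → sb j ≤ sb i) :
    IsGreatest ((fun x => ip m (truncPos m u) x) '' Pb m b)
      (ip m (truncPos m u) (act m σ⁻¹ (supervertexDec m sb))) := by
  obtain ⟨a, ha, hu⟩ := hu
  have hsb_abs : ∀ i ∈ Finset.Icc 1 m, |sb i| ≤ 1 := by
    intro i hi
    simp only [Finset.mem_Icc] at hi
    set j : Fin m := ⟨i - 1, by omega⟩ with hjdef
    have hij : (j : ℕ) + 1 = i := by simp [hjdef]; omega
    have hj := hsb j
    rw [hij] at hj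
    rw [hj]
    apply hb
    simp only [Finset.mem_Icc]
    exact ⟨by omega, by
      have := ((σ⁻¹ : Equiv.Perm (Fin m)) j).isLt; omega⟩
  have hbdecsb : ∀ i ≤ m, bext m sb (i+1) ≤ bext m sb i := by
    intro i hi
    rcases Nat.eq_zero_or_pos i with rfl | hpos
    · have h1 : bext m sb 0 = 1 := by simp [bext]
      have h2 : bext m sb 1 = sb 1 := by
        unfold bext; rw [if_neg one_ne_zero, if_pos hm]
      rw [h1, h2]
      have := hsb_abs 1 (by simp only [Finset.mem_Icc]; omega)
      exact (abs_le.mp this).2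
    · rcases Nat.lt_or_ge i m with hlt | hge
      · have h1 : bext m sb i = sb i := by
          unfold bext; rw [if_neg (by omega), if_pos (by omega)]
        have h2 : bext m sb (i+1) = sb (i+1) := by
          unfold bext; rw [if_neg (by omega), if_pos (by omega)]
        rw [h1, h2]
        exact hdec i (i+1) hpos (by omega) (by omega)
      · have him : i = m := le_antisymm hi hge
        rw [him]
        have h1 : bext m sb m = sb m := by
          unfold bext; rw [if_neg (by omega), if_pos (le_refl m)]
        have h2 : bext m sb (m+1) = -1 := by simp [bext]
        rw [h1, h2]
        have := hsb_abs m (by simp only [Finset.mem_Icc]; omega)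
        linarith [(abs_le.mp this).1]
  constructor
  · exact ⟨act m σ⁻¹ (supervertexDec m sb),
      Pb_act_bwd m b sb σ hsb _ (mem_core m sb hbdecsb), rfl⟩
  · rintro v ⟨x, hx, rfl⟩
    have hax := Pb_act_fwd m b sb σ hsb x hx
    have hcore := core_ub m sb hbdecsb (aperm m σ a) (aperm_pos m σ a ha) (act m σ x) hax
    have hact_tr : act m σ (truncPos m u)
        = truncPos m (fun lam => ∑ i ∈ range (m+1), aperm m σ a i * ell m i lam) := by
      have h0 : act m σ (truncPos m u) = truncPos m (act m σ u) := rfl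
      rw [h0, hu, act_u]
    have key1 : ip m (truncPos m u) x
        = ip m (truncPos m (fun lam => ∑ i ∈ range (m+1), aperm m σ a i * ell m i lam))
            (act m σ x) := by
      rw [← ip_act m σ (truncPos m u) x, hact_tr]
    have key2 : ip m (truncPos m u) (act m σ⁻¹ (supervertexDec m sb))
        = ip m (truncPos m (fun lam => ∑ i ∈ range (m+1), aperm m σ a i * ell m i lam))
            (supervertexDec m sb) := by
      rw [← ip_act m σ (truncPos m u) (act m σ⁻¹ (supervertexDec m sb)), act_act_inv,
        hact_tr]
    show ip m (truncPos m u) x ≤ _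
    rw [key1, key2]
    exact hcore
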